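/- Let (H, 𝔉) be a measurable space, let μ and ν be probability measures on H, and let ε, δ ≥ 0 be such that μ(B) ≤ e^ε·ν(B) + δ for every measurable set B ⊆ H. Let f : H → ℝ be measurable with 0 ≤ f(h) ≤ M for all h ∈ H, where M > 0. Then ∫ f dμ ≤ e^ε·∫ f dν + M·δ. -/

import Mathlib

open MeasureTheory Real Set

lemma meas_aux {H : Type*} [MeasurableSpace H] (m : Measure H) [IsProbabilityMeasure m]
    (f : H → ℝ) (hf : Measurable f) :
    Measurable (fun t : ℝ => (m {a | t ≤ f a}).toReal) := by
  refine Measurable.ennreal_toReal (Antitone.measurable ?_)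
  intro s t hst
  exact measure_mono (fun a ha => le_trans hst ha)

lemma intble_aux {H : Type*} [MeasurableSpace H] (m : Measure H) [IsProbabilityMeasure m]
    (f : H → ℝ) (hf : Measurable f) (M : ℝ) :
    IntegrableOn (fun t : ℝ => (m {a | t ≤ f a}).toReal) (Ioc 0 M) := by
  refine Measure.integrableOn_of_bounded (M := 1) (by simp) ((meas_aux m f hf).aestronglyMeasurable) ?_
  filter_upwards with t
  rw [Real.norm_eq_abs, abs_of_nonneg ENNReal.toReal_nonneg]
  exact ENNReal.toReal_le_of_le_ofReal zero_le_one (by simp [prob_le_one])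

/-- Integral-transfer step: a one-sided (ε,δ)-DP inequality between two probability
measures transfers to integrals of a loss bounded in [0, M]:
∫ f dμ ≤ e^ε · ∫ f dν + M·δ. -/
theorem integral_transfer_dp
    {H : Type*} [MeasurableSpace H]
    (μ ν : Measure H) [IsProbabilityMeasure μ] [IsProbabilityMeasure ν]
    (ε δ M : ℝ) (hε : 0 ≤ ε) (hδ : 0 ≤ δ) (hM : 0 < M)
    (hdp : ∀ B : Set H, MeasurableSet B →
      μ B ≤ ENNReal.ofReal (Real.exp ε) * ν B + ENNReal.ofReal δ)
    (f : H → ℝ) (hf : Measurable f)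
    (hf0 : ∀ h, 0 ≤ f h) (hfM : ∀ h, f h ≤ M) :
    ∫ h, f h ∂μ ≤ Real.exp ε * ∫ h, f h ∂ν + M * δ := by
  have hf_int : ∀ (m : Measure H), IsProbabilityMeasure m → Integrable f m := by
    intro m hm
    refine Integrable.mono' (integrable_const M) hf.aestronglyMeasurable ?_
    filter_upwards with a
    rw [Real.norm_eq_abs, abs_of_nonneg (hf0 a)]
    exact hfM a
  have hμ := (hf_int μ inferInstance).integral_eq_integral_Ioc_meas_le (M := M)
    (Filter.Eventually.of_forall hf0) (Filter.Eventually.of_forall hfM)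
  have hν := (hf_int ν inferInstance).integral_eq_integral_Ioc_meas_le (M := M)
    (Filter.Eventually.of_forall hf0) (Filter.Eventually.of_forall hfM)
  rw [hμ, hν]
  have key : ∀ t : ℝ, (μ {a | t ≤ f a}).toReal ≤
      Real.exp ε * (ν {a | t ≤ f a}).toReal + δ := by
    intro t
    have hB : MeasurableSet {a | t ≤ f a} := hf measurableSet_Ici
    have := hdp _ hB
    have hfin : ENNReal.ofReal (Real.exp ε) * ν {a | t ≤ f a} + ENNReal.ofReal δ ≠ ⊤ := by
      refine ENNReal.add_ne_top.mpr ⟨ENNReal.mul_ne_top (by simp) (measure_ne_top _ _), by simp⟩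
    calc (μ {a | t ≤ f a}).toReal
        ≤ (ENNReal.ofReal (Real.exp ε) * ν {a | t ≤ f a} + ENNReal.ofReal δ).toReal :=
          ENNReal.toReal_mono hfin this
      _ = Real.exp ε * (ν {a | t ≤ f a}).toReal + δ := by
          rw [ENNReal.toReal_add (ENNReal.mul_ne_top (by simp) (measure_ne_top _ _)) (by simp),
            ENNReal.toReal_mul, ENNReal.toReal_ofReal (Real.exp_nonneg ε),
            ENNReal.toReal_ofReal hδ]
  calc ∫ t in Ioc 0 M, (μ {a | t ≤ f a}).toReal
      ≤ ∫ t in Ioc 0 M, (Real.exp ε * (ν {a | t ≤ f a}).toReal + δ) := by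
        refine setIntegral_mono_on (intble_aux μ f hf M)
          (((intble_aux ν f hf M).const_mul _).add ((integrableOn_const_iff (by simp)).mpr (Or.inr (by simp))))
          measurableSet_Ioc (fun t _ => key t)
    _ = Real.exp ε * (∫ t in Ioc 0 M, (ν {a | t ≤ f a}).toReal) + M * δ := by
        rw [integral_add ((intble_aux ν f hf M).const_mul _)
          ((integrableOn_const_iff (by simp)).mpr (Or.inr (by simp)))]
        rw [integral_const, integral_const_mul]
        simp [Real.volume_Ioc, hM.le, smul_eq_mul, mul_comm]
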